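/- Fix integers n ≥ 2, r ≥ 1, s ≥ 0, m ≥ 0. Work in the group algebra ℤ[ℤ × (Fin m → ℤ)] (Laurent polynomials in one variable t and m variables e₁, …, e_m), where t is the monomial with exponent (1, 0) and e_j is the monomial with exponent (0, δ_j). Let Q = (t - t⁻¹)^(n-2) * ((2r-1) + r*t² - r*t⁻²)^s * ∏_{j=1}^{m} (e_j + e_j⁻¹). Then the coefficient of Q at the exponent (n-2+2s, (1,1,…,1)) equals r^s. -/

import Mathlib

section SWhelpers

variable {A G : Type*} [AddCommMonoid A] [AddCommMonoid G] [PartialOrder G] [IsOrderedCancelAddMonoid G]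
  {D : A → G}

lemma SW_coeff_mul (hadd : ∀ a b, D (a + b) = D a + D b) (hD : Function.Injective D)
    (p q : AddMonoidAlgebra ℤ A) (a b : A)
    (hp : ∀ x ∈ p.coeff.support, D x ≤ D a) (hq : ∀ x ∈ q.coeff.support, D x ≤ D b) :
    (p * q).coeff (a + b) = p.coeff a * q.coeff b := by
  classical
  simp_rw [AddMonoidAlgebra.coeff_mul, Finsupp.sum]
  rw [Finset.sum_eq_single a, Finset.sum_eq_single b, if_pos rfl]
  · refine fun y hy hne => if_neg (fun he => ?_)
    apply_fun D at he
    rw [hadd, hadd] at he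
    exact hne (hD (add_left_cancel he))
  · intro h; rw [if_pos rfl, Finsupp.notMem_support_iff.1 h, mul_zero]
  · refine fun x hx hne => Finset.sum_eq_zero (fun y hy => if_neg <| fun he => ?_)
    apply_fun D at he
    rw [hadd, hadd] at he
    exact (add_lt_add_of_lt_of_le ((hp x hx).lt_of_ne (hD.ne_iff.2 hne)) (hq y hy)).ne he
  · refine fun h => Finset.sum_eq_zero (fun y _ => ite_eq_right_iff.mpr <| fun _ => ?_)
    rw [Finsupp.notMem_support_iff.mp h, zero_mul]

lemma SW_coeff_prod (hadd : ∀ a b, D (a + b) = D a + D b) (hD : Function.Injective D)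
    {ι : Type*} (s : Finset ι) (f : ι → AddMonoidAlgebra ℤ A) (a : ι → A)
    (h : ∀ i ∈ s, ∀ x ∈ (f i).coeff.support, D x ≤ D (a i)) :
    (∀ x ∈ (∏ i ∈ s, f i).coeff.support, D x ≤ D (∑ i ∈ s, a i)) ∧
      (∏ i ∈ s, f i).coeff (∑ i ∈ s, a i) = ∏ i ∈ s, (f i).coeff (a i) := by
  classical
  induction s using Finset.cons_induction with
  | empty =>
    constructor
    · intro x hx
      rw [Finset.prod_empty, AddMonoidAlgebra.one_def, AddMonoidAlgebra.coeff_single] at hx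
      have hx' := Finsupp.support_single_subset hx
      simp only [Finset.mem_singleton] at hx'
      simp [hx']
    · simp [AddMonoidAlgebra.one_def]
  | cons i s his ih =>
    have hi := h i (Finset.mem_cons_self i s)
    have ih' := ih fun j hj => h j (Finset.mem_cons_of_mem hj)
    rw [Finset.prod_cons, Finset.sum_cons, Finset.prod_cons]
    constructor
    · intro x hx
      obtain ⟨y, hy, z, hz, rfl⟩ := Finset.mem_add.mp (AddMonoidAlgebra.support_coeff_mul_subset _ _ hx)
      rw [hadd, hadd]
      exact add_le_add (hi y hy) (ih'.1 z hz)
    · rw [SW_coeff_mul hadd hD _ _ _ _ hi ih'.1, ih'.2]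

lemma SW_coeff_pow (hadd : ∀ a b, D (a + b) = D a + D b) (hD : Function.Injective D)
    (p : AddMonoidAlgebra ℤ A) (a : A) (k : ℕ)
    (h : ∀ x ∈ p.coeff.support, D x ≤ D a) :
    (∀ x ∈ (p ^ k).coeff.support, D x ≤ D (k • a)) ∧ (p ^ k).coeff (k • a) = (p.coeff a) ^ k := by
  have := SW_coeff_prod hadd hD (Finset.range k) (fun _ => p) (fun _ => a) (fun _ _ => h)
  simpa using this

end SWhelpers

/-- Work in the group algebra `ℤ[ℤ × (Fin m → ℤ)]`, Laurent polynomials in one variable `t`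
(the monomial with exponent `(1, 0)`) and `m` variables `e j` (the monomials with exponent
`(0, δ_j)`).  For `n ≥ 2`, `r ≥ 1`, `s ≥ 0`, `m ≥ 0`, the blown-up Seiberg–Witten polynomial
`Q = (t - t⁻¹)^(n-2) * ((2r-1) + r t² - r t⁻²)^s * ∏_j (e j + (e j)⁻¹)` has coefficient `r^s`
at the top exponent `(n-2+2s, (1,…,1))`. -/
theorem SW_blowup_top_coefficient (n : ℕ) (hn : 2 ≤ n) (r : ℤ) (hr : 1 ≤ r) (s m : ℕ)
    (t tinv : AddMonoidAlgebra ℤ (ℤ × (Fin m → ℤ)))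
    (e einv : Fin m → AddMonoidAlgebra ℤ (ℤ × (Fin m → ℤ)))
    (ht : t = AddMonoidAlgebra.single ((1 : ℤ), (0 : Fin m → ℤ)) 1)
    (htinv : tinv = AddMonoidAlgebra.single ((-1 : ℤ), (0 : Fin m → ℤ)) 1)
    (he : ∀ j : Fin m, e j = AddMonoidAlgebra.single ((0 : ℤ), Pi.single j (1 : ℤ)) 1)
    (heinv : ∀ j : Fin m, einv j = AddMonoidAlgebra.single ((0 : ℤ), Pi.single j (-1 : ℤ)) 1)
    (Q : AddMonoidAlgebra ℤ (ℤ × (Fin m → ℤ)))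
    (hQ : Q = (t - tinv) ^ (n - 2) *
      (((2 * r - 1 : ℤ) : AddMonoidAlgebra ℤ (ℤ × (Fin m → ℤ))) +
        r • (t ^ 2) - r • (tinv ^ 2)) ^ s *
      ∏ j : Fin m, (e j + einv j)) :
    Q.coeff (((n : ℤ) - 2 + 2 * s), fun _ => 1) = r ^ s := by
  classical
  set D : ℤ × (Fin m → ℤ) → Lex (Fin (m + 1) →₀ ℤ) :=
    fun x => toLex (Finsupp.equivFunOnFinite.symm (Fin.cons x.1 x.2)) with hD_def
  have Fadd : ∀ a b : ℤ × (Fin m → ℤ),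
      (Finsupp.equivFunOnFinite.symm (Fin.cons (a + b).1 (a + b).2) : Fin (m+1) →₀ ℤ)
        = Finsupp.equivFunOnFinite.symm (Fin.cons a.1 a.2)
          + Finsupp.equivFunOnFinite.symm (Fin.cons b.1 b.2) := by
    intro a b
    ext i
    simp only [Finsupp.add_apply, Finsupp.equivFunOnFinite_symm_apply_apply]
    refine Fin.cases ?_ (fun j => ?_) i <;> simp [Prod.fst_add, Prod.snd_add]
  have hadd : ∀ a b, D (a + b) = D a + D b := fun a b => congrArg toLex (Fadd a b)
  -- injectivity of D
  have hinj : Function.Injective D := by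
    intro x y hxy
    have h1 : Finsupp.equivFunOnFinite.symm (Fin.cons x.1 x.2)
        = Finsupp.equivFunOnFinite.symm (Fin.cons y.1 y.2) := toLex.injective hxy
    have h2 : (Fin.cons x.1 x.2 : Fin (m+1) → ℤ) = Fin.cons y.1 y.2 :=
      Finsupp.equivFunOnFinite.symm.injective h1
    have h3 := fun i => congrFun h2 i
    refine Prod.ext ?_ ?_
    · simpa using h3 0
    · funext j; simpa using h3 j.succ
  -- monotonicity of D
  have hmono : ∀ x y : ℤ × (Fin m → ℤ), x.1 ≤ y.1 → x.2 ≤ y.2 → D x ≤ D y := by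
    intro x y h1 h2
    refine Finsupp.toLex_monotone ?_
    rw [Finsupp.le_def]
    intro i
    simp only [Finsupp.equivFunOnFinite_symm_apply_apply]
    refine Fin.cases ?_ (fun j => ?_) i
    · simpa using h1
    · simpa using h2 j
  -- factor 1 : (t - tinv) ^ (n - 2)
  have hval1 : (t - tinv).coeff ((1 : ℤ), (0 : Fin m → ℤ)) = 1 := by
    rw [ht, htinv, AddMonoidAlgebra.coeff_sub, Finsupp.sub_apply, AddMonoidAlgebra.coeff_single, AddMonoidAlgebra.coeff_single]
    rw [Finsupp.single_eq_same, Finsupp.single_eq_of_ne (by simp [Prod.ext_iff])]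
    norm_num
  have hb1 : ∀ x ∈ (t - tinv).coeff.support, D x ≤ D ((1 : ℤ), (0 : Fin m → ℤ)) := by
    intro x hx
    rw [ht, htinv, AddMonoidAlgebra.coeff_sub, AddMonoidAlgebra.coeff_single, AddMonoidAlgebra.coeff_single] at hx
    rcases Finset.mem_union.mp (Finsupp.support_sub hx) with h | h
    · have := Finsupp.support_single_subset h
      simp only [Finset.mem_singleton] at this
      simp [this]
    · have := Finsupp.support_single_subset h
      simp only [Finset.mem_singleton] at this
      subst this
      exact hmono _ _ (by norm_num) le_rfl
  obtain ⟨hb1p, hv1p⟩ := SW_coeff_pow hadd hinj (t - tinv) _ (n - 2) hb1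
  -- factor 2 : the middle term
  set M : AddMonoidAlgebra ℤ (ℤ × (Fin m → ℤ)) :=
    ((2 * r - 1 : ℤ) : AddMonoidAlgebra ℤ (ℤ × (Fin m → ℤ))) + r • (t ^ 2) - r • (tinv ^ 2)
    with hM_def
  have hC : ((2 * r - 1 : ℤ) : AddMonoidAlgebra ℤ (ℤ × (Fin m → ℤ)))
      = AddMonoidAlgebra.single (0 : ℤ × (Fin m → ℤ)) (2 * r - 1) := rfl
  have ht2 : r • (t ^ 2) = AddMonoidAlgebra.single ((2 : ℤ), (0 : Fin m → ℤ)) r := by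
    rw [ht, sq, AddMonoidAlgebra.single_mul_single, AddMonoidAlgebra.smul_single]
    norm_num
  have htinv2 : r • (tinv ^ 2) = AddMonoidAlgebra.single ((-2 : ℤ), (0 : Fin m → ℤ)) r := by
    rw [htinv, sq, AddMonoidAlgebra.single_mul_single, AddMonoidAlgebra.smul_single]
    norm_num
  have hvalM : M.coeff ((2 : ℤ), (0 : Fin m → ℤ)) = r := by
    rw [hM_def, hC, ht2, htinv2, AddMonoidAlgebra.coeff_sub, AddMonoidAlgebra.coeff_add, Finsupp.sub_apply, Finsupp.add_apply, AddMonoidAlgebra.coeff_single, AddMonoidAlgebra.coeff_single, AddMonoidAlgebra.coeff_single]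
    rw [Finsupp.single_eq_same, Finsupp.single_eq_of_ne (by simp [Prod.ext_iff]),
      Finsupp.single_eq_of_ne (by simp [Prod.ext_iff])]
    ring
  have hbM : ∀ x ∈ M.coeff.support, D x ≤ D ((2 : ℤ), (0 : Fin m → ℤ)) := by
    intro x hx
    rw [hM_def, hC, ht2, htinv2, AddMonoidAlgebra.coeff_sub, AddMonoidAlgebra.coeff_add, AddMonoidAlgebra.coeff_single, AddMonoidAlgebra.coeff_single, AddMonoidAlgebra.coeff_single] at hx
    rcases Finset.mem_union.mp (Finsupp.support_sub hx) with h | h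
    · rcases Finset.mem_union.mp (Finsupp.support_add h) with h' | h'
      · have := Finsupp.support_single_subset h'
        simp only [Finset.mem_singleton] at this
        subst this
        exact hmono _ _ (by norm_num) le_rfl
      · have := Finsupp.support_single_subset h'
        simp only [Finset.mem_singleton] at this
        simp [this]
    · have := Finsupp.support_single_subset h
      simp only [Finset.mem_singleton] at this
      subst this
      exact hmono _ _ (by norm_num) le_rfl
  obtain ⟨hbMp, hvMp⟩ := SW_coeff_pow hadd hinj M _ s hbM
  -- factor 3 : the product of e j + einv j
  have hbE : ∀ j : Fin m, ∀ x ∈ (e j + einv j).coeff.support,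
      D x ≤ D ((0 : ℤ), (Pi.single j (1 : ℤ) : Fin m → ℤ)) := by
    intro j x hx
    rw [he j, heinv j, AddMonoidAlgebra.coeff_add, AddMonoidAlgebra.coeff_single, AddMonoidAlgebra.coeff_single] at hx
    rcases Finset.mem_union.mp (Finsupp.support_add hx) with h | h
    · have := Finsupp.support_single_subset h
      simp only [Finset.mem_singleton] at this
      simp [this]
    · have := Finsupp.support_single_subset h
      simp only [Finset.mem_singleton] at this
      subst this
      refine hmono _ _ le_rfl ?_
      intro i
      rcases eq_or_ne i j with rfl | hij
      · simp
      · simp [Pi.single_apply, hij]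
  have hvalE : ∀ j : Fin m, (e j + einv j).coeff (((0 : ℤ), Pi.single j (1 : ℤ)) : ℤ × (Fin m → ℤ)) = 1 := by
    intro j
    have hne : (((0 : ℤ), Pi.single j (-1 : ℤ)) : ℤ × (Fin m → ℤ)) ≠ ((0 : ℤ), Pi.single j (1 : ℤ)) := by
      intro hcontra
      have := congrFun (congrArg Prod.snd hcontra) j
      simp at this
    rw [he j, heinv j, AddMonoidAlgebra.coeff_add, AddMonoidAlgebra.coeff_single, AddMonoidAlgebra.coeff_single, Finsupp.add_apply, Finsupp.single_eq_same,
      Finsupp.single_eq_of_ne hne.symm]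
    norm_num
  obtain ⟨hbEp, hvEp⟩ := SW_coeff_prod hadd hinj Finset.univ (fun j => e j + einv j)
    (fun j => (((0 : ℤ), Pi.single j (1 : ℤ)) : ℤ × (Fin m → ℤ))) (fun j _ => hbE j)
  -- assemble
  have hsumE : (∑ j : Fin m, (((0 : ℤ), Pi.single j (1 : ℤ)) : ℤ × (Fin m → ℤ)))
      = ((0 : ℤ), fun _ => (1 : ℤ)) := by
    refine Prod.ext ?_ ?_
    · rw [Prod.fst_sum]; simp
    · rw [Prod.snd_sum]
      simpa using Finset.univ_sum_single (fun _ : Fin m => (1 : ℤ))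
  rw [hsumE] at hbEp hvEp
  have hb12 : ∀ x ∈ ((t - tinv) ^ (n - 2) * M ^ s).coeff.support,
      D x ≤ D ((n - 2) • ((1 : ℤ), (0 : Fin m → ℤ)) + s • ((2 : ℤ), (0 : Fin m → ℤ))) := by
    intro x hx
    obtain ⟨y, hy, z, hz, rfl⟩ := Finset.mem_add.mp (AddMonoidAlgebra.support_coeff_mul_subset _ _ hx)
    rw [hadd, hadd]
    exact add_le_add (hb1p y hy) (hbMp z hz)
  have hsum : ((((n : ℤ) - 2 + 2 * s), (fun _ => (1 : ℤ))) : ℤ × (Fin m → ℤ))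
      = ((n - 2) • ((1 : ℤ), (0 : Fin m → ℤ)) + s • ((2 : ℤ), (0 : Fin m → ℤ)))
        + ((0 : ℤ), fun _ => (1 : ℤ)) := by
    refine Prod.ext ?_ ?_
    · simp only [Prod.smul_mk, Prod.mk_add_mk, smul_eq_mul, nsmul_eq_mul, mul_one, smul_zero]
      push_cast [Nat.cast_sub hn]
      ring
    · funext i
      simp only [Prod.smul_mk, Prod.mk_add_mk, smul_zero]
      simp
  rw [hQ, hsum,
    SW_coeff_mul hadd hinj _ _ _ _ hb12 hbEp,
    SW_coeff_mul hadd hinj _ _ _ _ hb1p hbMp,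
    hv1p, hvMp, hvEp, hval1, hvalM]
  rw [Finset.prod_congr rfl (fun j _ => hvalE j)]
  simp
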